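/- Let T_− < T_+ be real numbers and let ρ(y) = 1/(π √((y−T_−)(T_+−y))) for y ∈ (T_−, T_+). Then ρ satisfies the balance equation 2 ρ(y) = ∫_{T_−}^{y} ρ(x)/(T_+ − x) dx + ∫_{y}^{T_+} ρ(x)/(x − T_−) dx for every y ∈ (T_−, T_+); moreover ∫_{T_−}^{T_+} ρ(y) dy = 1. -/

import Mathlib

open MeasureTheory

section ArcsineHelpers
open Real Set

lemma intInt_of_bound {a b : ℝ} (hab : a ≤ b) {f g : ℝ → ℝ}
    (hf : ContinuousOn f (Set.Ioo a b)) (hg : IntervalIntegrable g volume a b)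
    (hbd : ∀ x ∈ Set.Ioo a b, ‖f x‖ ≤ g x) :
    IntervalIntegrable f volume a b := by
  rw [intervalIntegrable_iff_integrableOn_Ioo_of_le hab] at hg ⊢
  exact hg.mono' (hf.aestronglyMeasurable measurableSet_Ioo)
    ((ae_restrict_iff' measurableSet_Ioo).2 (Filter.Eventually.of_forall hbd))

lemma intInt_left (a b : ℝ) :
    IntervalIntegrable (fun x => (x - a) ^ (-(1/2) : ℝ)) volume a b := by
  have h := (intervalIntegral.intervalIntegrable_rpow' (a := 0) (b := b - a)
    (r := -(1/2)) (by norm_num)).comp_sub_right a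
  simpa using h

lemma intInt_right (a b : ℝ) :
    IntervalIntegrable (fun x => (b - x) ^ (-(1/2) : ℝ)) volume a b := by
  have h := (intervalIntegral.intervalIntegrable_rpow' (a := 0) (b := b - a)
    (r := -(1/2)) (by norm_num)).comp_sub_left b
  simpa [sub_sub_cancel] using h.symm

lemma rpow_neg_half {x : ℝ} (hx : 0 < x) : x ^ (-(1/2) : ℝ) = 1 / Real.sqrt x := by
  rw [Real.rpow_neg hx.le, ← Real.sqrt_eq_rpow, one_div]

-- continuity of rho on Ioo
lemma rho_contOn {a b : ℝ} {s : Set ℝ} (hs : ∀ x ∈ s, a < x ∧ x < b) :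
    ContinuousOn (fun x => 1 / (Real.pi * Real.sqrt ((x - a) * (b - x)))) s := by
  apply ContinuousOn.div continuousOn_const
  · exact (continuousOn_const.mul
      (Real.continuous_sqrt.comp_continuousOn (by fun_prop)))
  · intro x hx
    obtain ⟨h1, h2⟩ := hs x hx
    have : 0 < Real.sqrt ((x - a) * (b - x)) := Real.sqrt_pos.2 (by nlinarith)
    positivity

-- integrability of rho on half intervals
lemma rho_intInt {a b : ℝ} (hab : a < b) :
    IntervalIntegrable (fun x => 1 / (Real.pi * Real.sqrt ((x - a) * (b - x)))) volume a b := by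
  have hpi := Real.pi_pos
  set m := (a + b) / 2 with hm
  have ham : a < m := by simp [hm]; linarith
  have hmb : m < b := by simp [hm]; linarith
  apply IntervalIntegrable.trans (b := m)
  · -- on a..m, bound by C * (x-a)^(-1/2)
    apply intInt_of_bound ham.le (rho_contOn (fun x hx => ⟨hx.1, lt_trans hx.2 hmb⟩))
      ((intInt_left a m).const_mul (1 / (Real.pi * Real.sqrt (b - m))))
    intro x hx
    obtain ⟨h1, h2⟩ := hx
    have hxa : (0:ℝ) < x - a := by linarith
    have hbx : (0:ℝ) < b - x := by linarith
    have hbm : (0:ℝ) < b - m := by linarith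
    rw [Real.norm_eq_abs, abs_of_nonneg (by positivity), rpow_neg_half hxa]
    have e1 : 1 / (Real.pi * Real.sqrt ((x - a) * (b - x)))
        = 1 / (Real.pi * (Real.sqrt (x - a) * Real.sqrt (b - x))) := by
      rw [Real.sqrt_mul hxa.le]
    have e2 : 1 / (Real.pi * Real.sqrt (b - m)) * (1 / Real.sqrt (x - a))
        = 1 / (Real.pi * (Real.sqrt (x - a) * Real.sqrt (b - m))) := by
      ring
    rw [e1, e2]
    have hsm : 0 < Real.sqrt (b - m) := Real.sqrt_pos.2 hbm
    gcongr <;> first | positivity | exact Real.sqrt_le_sqrt (by linarith)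
  · apply intInt_of_bound hmb.le (rho_contOn (fun x hx => ⟨lt_trans ham hx.1, hx.2⟩))
      ((intInt_right m b).const_mul (1 / (Real.pi * Real.sqrt (m - a))))
    intro x hx
    obtain ⟨h1, h2⟩ := hx
    have hxa : (0:ℝ) < x - a := by linarith
    have hbx : (0:ℝ) < b - x := by linarith
    have hma : (0:ℝ) < m - a := by linarith
    rw [Real.norm_eq_abs, abs_of_nonneg (by positivity), rpow_neg_half hbx]
    have e1 : 1 / (Real.pi * Real.sqrt ((x - a) * (b - x)))
        = 1 / (Real.pi * (Real.sqrt (b - x) * Real.sqrt (x - a))) := by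
      rw [Real.sqrt_mul hxa.le]; ring
    have e2 : 1 / (Real.pi * Real.sqrt (m - a)) * (1 / Real.sqrt (b - x))
        = 1 / (Real.pi * (Real.sqrt (b - x) * Real.sqrt (m - a))) := by
      ring
    rw [e1, e2]
    have hsm : 0 < Real.sqrt (m - a) := Real.sqrt_pos.2 hma
    gcongr <;> first | positivity | exact Real.sqrt_le_sqrt (by linarith)

lemma mass_eq {a b : ℝ} (hab : a < b) :
    (∫ y in a..b, 1 / (Real.pi * Real.sqrt ((y - a) * (b - y)))) = 1 := by
  have hpi := Real.pi_pos
  have hba : (0:ℝ) < b - a := by linarith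
  set H : ℝ → ℝ := fun x => Real.arcsin ((2 * x - a - b) / (b - a)) / Real.pi with hH
  have hcont : ContinuousOn H (Set.Icc a b) :=
    ((Real.continuous_arcsin.comp (by fun_prop)).div_const Real.pi).continuousOn
  have hderiv : ∀ x ∈ Set.Ioo a b, HasDerivWithinAt H
      (1 / (Real.pi * Real.sqrt ((x - a) * (b - x)))) (Set.Ioi x) x := by
    intro x hx
    obtain ⟨h1, h2⟩ := hx
    have hxa : (0:ℝ) < x - a := by linarith
    have hbx : (0:ℝ) < b - x := by linarith
    set u := (2 * x - a - b) / (b - a) with hu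
    have hu1 : -1 < u := by rw [hu, lt_div_iff₀ hba]; linarith
    have hu2 : u < 1 := by rw [hu, div_lt_iff₀ hba]; linarith
    have hinner : HasDerivAt (fun x : ℝ => (2 * x - a - b) / (b - a)) (2 / (b - a)) x := by
      have h : HasDerivAt (fun x : ℝ => 2 * x - a - b) 2 x := by
        simpa using (((hasDerivAt_id x).const_mul 2).sub_const a).sub_const b
      exact h.div_const (b - a)
    have harc := (Real.hasDerivAt_arcsin (ne_of_gt hu1) (ne_of_lt hu2)).comp x hinner
    have hsq : Real.sqrt (1 - u ^ 2) = 2 * Real.sqrt ((x - a) * (b - x)) / (b - a) := by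
      have h4 : (2 * Real.sqrt ((x - a) * (b - x)) / (b - a)) ^ 2 = 1 - u ^ 2 := by
        rw [div_pow, mul_pow, Real.sq_sqrt (by nlinarith : (0:ℝ) ≤ (x - a) * (b - x)), hu,
          div_pow]
        field_simp
        ring
      rw [← h4, Real.sqrt_sq (by positivity)]
    have hder : HasDerivAt H (1 / (Real.pi * Real.sqrt ((x - a) * (b - x)))) x := by
      have := harc.div_const Real.pi
      refine this.congr_deriv (Eq.symm ?_)
      rw [hsq]
      have hs : 0 < Real.sqrt ((x - a) * (b - x)) := Real.sqrt_pos.2 (by nlinarith)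
      field_simp
    exact hder.hasDerivWithinAt
  rw [intervalIntegral.integral_eq_sub_of_hasDeriv_right_of_le hab.le hcont hderiv
    (rho_intInt hab)]
  have hb : (2 * b - a - b) / (b - a) = 1 := by field_simp; ring
  have ha : (2 * a - a - b) / (b - a) = -1 := by field_simp; ring
  rw [hH]
  simp only [hb, ha, Real.arcsin_one, Real.arcsin_neg_one]
  field_simp
  ring

lemma balance_left {a b y : ℝ} (hay : a < y) (hyb : y < b) :
    (∫ x in a..y, (1 / (Real.pi * Real.sqrt ((x - a) * (b - x)))) / (b - x))
      = 2 / (Real.pi * (b - a)) * Real.sqrt ((y - a) / (b - y)) := by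
  have hpi := Real.pi_pos
  have hba : (0:ℝ) < b - a := by linarith
  have hby : (0:ℝ) < b - y := by linarith
  set F : ℝ → ℝ := fun x => 2 / (Real.pi * (b - a)) * Real.sqrt ((x - a) / (b - x)) with hF
  have hcont : ContinuousOn F (Set.Icc a y) := by
    apply continuousOn_const.mul
    apply Real.continuous_sqrt.comp_continuousOn
    apply ContinuousOn.div (by fun_prop) (by fun_prop)
    intro x hx
    have := hx.2
    intro h
    have : x = b := by linarith [sub_eq_zero.1 h]
    linarith
  have hderiv : ∀ x ∈ Set.Ioo a y, HasDerivWithinAt F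
      ((1 / (Real.pi * Real.sqrt ((x - a) * (b - x)))) / (b - x)) (Set.Ioi x) x := by
    intro x hx
    obtain ⟨h1, h2⟩ := hx
    have hxa : (0:ℝ) < x - a := by linarith
    have hbx : (0:ℝ) < b - x := by linarith
    have hu : (0:ℝ) < (x - a) / (b - x) := by positivity
    have hinner : HasDerivAt (fun x : ℝ => (x - a) / (b - x)) ((b - a) / (b - x) ^ 2) x := by
      have h1' : HasDerivAt (fun x : ℝ => x - a) 1 x := (hasDerivAt_id x).sub_const a
      have h2' : HasDerivAt (fun x : ℝ => b - x) (-1) x := by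
        simpa using (hasDerivAt_id x).const_sub b
      have := h1'.div h2' (ne_of_gt hbx)
      refine this.congr_deriv (Eq.symm ?_)
      congr 1
      ring
    have hs := (Real.hasDerivAt_sqrt (ne_of_gt hu)).comp x hinner
    have hder : HasDerivAt F
        ((1 / (Real.pi * Real.sqrt ((x - a) * (b - x)))) / (b - x)) x := by
      have := hs.const_mul (2 / (Real.pi * (b - a)))
      refine this.congr_deriv (Eq.symm ?_)
      rw [Real.sqrt_div hxa.le, Real.sqrt_mul hxa.le]
      have hsa : 0 < Real.sqrt (x - a) := Real.sqrt_pos.2 hxa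
      have hsb : 0 < Real.sqrt (b - x) := Real.sqrt_pos.2 hbx
      have hsa2 : Real.sqrt (x - a) ^ 2 = x - a := Real.sq_sqrt hxa.le
      have hsb2 : Real.sqrt (b - x) ^ 2 = b - x := Real.sq_sqrt hbx.le
      field_simp
      linear_combination -hsb2
    exact hder.hasDerivWithinAt
  have hint : IntervalIntegrable
      (fun x => (1 / (Real.pi * Real.sqrt ((x - a) * (b - x)))) / (b - x)) volume a y := by
    apply intInt_of_bound hay.le
      (f := fun x => (1 / (Real.pi * Real.sqrt ((x - a) * (b - x)))) / (b - x))
      (g := fun x => 1 / (Real.pi * (Real.sqrt (b - y) * (b - y))) * (x - a) ^ (-(1/2) : ℝ))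
    · apply ContinuousOn.div (rho_contOn (fun x hx => ⟨hx.1, lt_trans hx.2 hyb⟩)) (by fun_prop)
      intro x hx
      have := hx.2
      intro h
      have : x = b := by linarith [sub_eq_zero.1 h]
      linarith
    · exact (intInt_left a y).const_mul _
    · intro x hx
      obtain ⟨h1, h2⟩ := hx
      have hxa : (0:ℝ) < x - a := by linarith
      have hbx : (0:ℝ) < b - x := by linarith
      have hsb : 0 < Real.sqrt ((x - a) * (b - x)) := Real.sqrt_pos.2 (by nlinarith)
      rw [Real.norm_eq_abs, abs_of_nonneg (by positivity), rpow_neg_half hxa]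
      have e1 : (1 / (Real.pi * Real.sqrt ((x - a) * (b - x)))) / (b - x)
          = 1 / (Real.pi * (Real.sqrt (x - a) * (Real.sqrt (b - x) * (b - x)))) := by
        rw [Real.sqrt_mul hxa.le, div_div]
        congr 1
        ring
      have e2 : 1 / (Real.pi * (Real.sqrt (b - y) * (b - y))) * (1 / Real.sqrt (x - a))
          = 1 / (Real.pi * (Real.sqrt (x - a) * (Real.sqrt (b - y) * (b - y)))) := by
        rw [div_mul_div_comm, one_mul]
        congr 1
        ring
      rw [e1, e2]
      have hsy : 0 < Real.sqrt (b - y) := Real.sqrt_pos.2 hby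
      gcongr <;> first | positivity | exact Real.sqrt_le_sqrt (by linarith) | linarith
  rw [intervalIntegral.integral_eq_sub_of_hasDeriv_right_of_le hay.le hcont hderiv hint]
  rw [hF]
  simp

lemma balance_right {a b y : ℝ} (hay : a < y) (hyb : y < b) :
    (∫ x in y..b, (1 / (Real.pi * Real.sqrt ((x - a) * (b - x)))) / (x - a))
      = 2 / (Real.pi * (b - a)) * Real.sqrt ((b - y) / (y - a)) := by
  have hpi := Real.pi_pos
  have hba : (0:ℝ) < b - a := by linarith
  have hya : (0:ℝ) < y - a := by linarith
  set G : ℝ → ℝ := fun x => -(2 / (Real.pi * (b - a)) * Real.sqrt ((b - x) / (x - a))) with hG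
  have hcont : ContinuousOn G (Set.Icc y b) := by
    apply ContinuousOn.neg
    apply continuousOn_const.mul
    apply Real.continuous_sqrt.comp_continuousOn
    apply ContinuousOn.div (by fun_prop) (by fun_prop)
    intro x hx
    have := hx.1
    intro h
    have : x = a := by linarith [sub_eq_zero.1 h]
    linarith
  have hderiv : ∀ x ∈ Set.Ioo y b, HasDerivWithinAt G
      ((1 / (Real.pi * Real.sqrt ((x - a) * (b - x)))) / (x - a)) (Set.Ioi x) x := by
    intro x hx
    obtain ⟨h1, h2⟩ := hx
    have hxa : (0:ℝ) < x - a := by linarith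
    have hbx : (0:ℝ) < b - x := by linarith
    have hu : (0:ℝ) < (b - x) / (x - a) := by positivity
    have hinner : HasDerivAt (fun x : ℝ => (b - x) / (x - a)) (-((b - a) / (x - a) ^ 2)) x := by
      have h1' : HasDerivAt (fun x : ℝ => b - x) (-1) x := by
        simpa using (hasDerivAt_id x).const_sub b
      have h2' : HasDerivAt (fun x : ℝ => x - a) 1 x := (hasDerivAt_id x).sub_const a
      have := h1'.div h2' (ne_of_gt hxa)
      refine this.congr_deriv (Eq.symm ?_)
      rw [← neg_div]
      congr 1
      ring
    have hs := (Real.hasDerivAt_sqrt (ne_of_gt hu)).comp x hinner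
    have hder : HasDerivAt G
        ((1 / (Real.pi * Real.sqrt ((x - a) * (b - x)))) / (x - a)) x := by
      have := (hs.const_mul (2 / (Real.pi * (b - a)))).neg
      refine this.congr_deriv (Eq.symm ?_)
      rw [Real.sqrt_div hbx.le, Real.sqrt_mul hxa.le]
      have hsa : 0 < Real.sqrt (x - a) := Real.sqrt_pos.2 hxa
      have hsb : 0 < Real.sqrt (b - x) := Real.sqrt_pos.2 hbx
      have hsa2 : Real.sqrt (x - a) ^ 2 = x - a := Real.sq_sqrt hxa.le
      have hsb2 : Real.sqrt (b - x) ^ 2 = b - x := Real.sq_sqrt hbx.le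
      field_simp
      linear_combination -hsa2
    exact hder.hasDerivWithinAt
  have hint : IntervalIntegrable
      (fun x => (1 / (Real.pi * Real.sqrt ((x - a) * (b - x)))) / (x - a)) volume y b := by
    apply intInt_of_bound hyb.le
      (f := fun x => (1 / (Real.pi * Real.sqrt ((x - a) * (b - x)))) / (x - a))
      (g := fun x => 1 / (Real.pi * (Real.sqrt (y - a) * (y - a))) * (b - x) ^ (-(1/2) : ℝ))
    · apply ContinuousOn.div (rho_contOn (fun x hx => ⟨lt_trans hay hx.1, hx.2⟩)) (by fun_prop)
      intro x hx
      have := hx.1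
      intro h
      have : x = a := by linarith [sub_eq_zero.1 h]
      linarith
    · exact (intInt_right y b).const_mul _
    · intro x hx
      obtain ⟨h1, h2⟩ := hx
      have hxa : (0:ℝ) < x - a := by linarith
      have hbx : (0:ℝ) < b - x := by linarith
      have hsb : 0 < Real.sqrt ((x - a) * (b - x)) := Real.sqrt_pos.2 (by nlinarith)
      rw [Real.norm_eq_abs, abs_of_nonneg (by positivity), rpow_neg_half hbx]
      have e1 : (1 / (Real.pi * Real.sqrt ((x - a) * (b - x)))) / (x - a)
          = 1 / (Real.pi * (Real.sqrt (b - x) * (Real.sqrt (x - a) * (x - a)))) := by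
        rw [Real.sqrt_mul hxa.le, div_div]
        congr 1
        ring
      have e2 : 1 / (Real.pi * (Real.sqrt (y - a) * (y - a))) * (1 / Real.sqrt (b - x))
          = 1 / (Real.pi * (Real.sqrt (b - x) * (Real.sqrt (y - a) * (y - a)))) := by
        rw [div_mul_div_comm, one_mul]
        congr 1
        ring
      rw [e1, e2]
      have hsy : 0 < Real.sqrt (y - a) := Real.sqrt_pos.2 hya
      gcongr <;> first | positivity | exact Real.sqrt_le_sqrt (by linarith) | linarith
  rw [intervalIntegral.integral_eq_sub_of_hasDeriv_right_of_le hyb.le hcont hderiv hint]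
  rw [hG]
  simp

end ArcsineHelpers

section ArcsineMain
open Real Set

/-- the arcsine density `ρ(y) = 1/(π √((y−T₋)(T₊−y)))` satisfies the balance
equation `2ρ(y) = ∫_{T₋}^{y} ρ(x)/(T₊−x) dx + ∫_{y}^{T₊} ρ(x)/(x−T₋) dx` and is a
probability density on `[T₋, T₊]`. -/
theorem arcsine_balance_equation (Tm Tp : ℝ) (hT : Tm < Tp) :
    (∀ y ∈ Set.Ioo Tm Tp,
        2 * (1 / (Real.pi * Real.sqrt ((y - Tm) * (Tp - y))))
          = (∫ x in Tm..y, (1 / (Real.pi * Real.sqrt ((x - Tm) * (Tp - x)))) / (Tp - x))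
            + ∫ x in y..Tp, (1 / (Real.pi * Real.sqrt ((x - Tm) * (Tp - x)))) / (x - Tm))
    ∧ (∫ y in Tm..Tp, (1 / (Real.pi * Real.sqrt ((y - Tm) * (Tp - y))))) = 1 := by
  constructor
  · intro y hy
    obtain ⟨h1, h2⟩ := hy
    rw [balance_left h1 h2, balance_right h1 h2]
    have hpi := Real.pi_pos
    have hya : (0:ℝ) < y - Tm := by linarith
    have hby : (0:ℝ) < Tp - y := by linarith
    rw [Real.sqrt_div hya.le, Real.sqrt_div hby.le, Real.sqrt_mul hya.le]
    have hsa : 0 < Real.sqrt (y - Tm) := Real.sqrt_pos.2 hya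
    have hsb : 0 < Real.sqrt (Tp - y) := Real.sqrt_pos.2 hby
    have hsa2 : Real.sqrt (y - Tm) ^ 2 = y - Tm := Real.sq_sqrt hya.le
    have hsb2 : Real.sqrt (Tp - y) ^ 2 = Tp - y := Real.sq_sqrt hby.le
    have hba : Tp - Tm = Real.sqrt (y - Tm) ^ 2 + Real.sqrt (Tp - y) ^ 2 := by
      rw [hsa2, hsb2]; ring
    have hTT : Tp - Tm ≠ 0 := ne_of_gt (by linarith)
    have hs' : Real.sqrt (y - Tm) ≠ 0 := ne_of_gt hsa
    have ht' : Real.sqrt (Tp - y) ≠ 0 := ne_of_gt hsb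
    have hAB : Real.sqrt (y - Tm) ^ 2 + Real.sqrt (Tp - y) ^ 2 ≠ 0 := by positivity
    rw [hba]
    field_simp
  · exact mass_eq hT

end ArcsineMain
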